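/- The substitution Y = (I_p - X)^{-1} - I_p maps the set {X symmetric : 0 < X < I_p} bijectively onto the cone of symmetric positive definite matrices, and under this change of variables ∫_{0 < X < I_p} (det X)^{a-(p+1)/2} (det(I_p - X))^{b-(p+1)/2} dX = ∫_{Y > 0} (det Y)^{a-(p+1)/2} (det(I_p + Y))^{-(a+b)} dY for all a, b > (p-1)/2. -/

import Mathlib

open MeasureTheory Matrix Real Finset

noncomputable section

/-- Index set for the independent entries of a symmetric `p × p` matrix. -/
abbrev SymIdx (p : ℕ) := {ij : Fin p × Fin p // ij.1 ≤ ij.2}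

/-- The symmetric matrix built from its upper-triangular coordinates. -/
def symOf {p : ℕ} (x : SymIdx p → ℝ) : Matrix (Fin p) (Fin p) ℝ :=
  Matrix.of fun i j => if h : i ≤ j then x ⟨(i, j), h⟩ else x ⟨(j, i), (le_total i j).resolve_left h⟩

/-- The real multivariate gamma function. -/
def Gammap (p : ℕ) (a : ℝ) : ℝ :=
  Real.pi ^ (((p : ℝ) * ((p : ℝ) - 1)) / 4) *
    ∏ i : Fin p, Real.Gamma (a - ((i : ℕ) : ℝ) / 2)


namespace BetaAux

open Polynomial

variable {p : ℕ}


/-- extraction of upper triangular coordinates -/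
def toSym (M : Matrix (Fin p) (Fin p) ℝ) : SymIdx p → ℝ := fun ij => M ij.1.1 ij.1.2

lemma symOf_apply (x : SymIdx p → ℝ) {i j : Fin p} (h : i ≤ j) :
    symOf x i j = x ⟨(i, j), h⟩ := by simp [symOf, h]

lemma symOf_transpose (x : SymIdx p → ℝ) : (symOf x)ᵀ = symOf x := by
  ext i j
  rcases le_or_gt i j with h | h
  · rcases eq_or_lt_of_le h with rfl | h'
    · rfl
    · simp [symOf, Matrix.transpose_apply, h, not_le.mpr h']
  · simp [symOf, Matrix.transpose_apply, h.le, not_le.mpr h]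

lemma toSym_symOf (x : SymIdx p → ℝ) : toSym (symOf x) = x := by
  funext ij
  simpa [toSym] using symOf_apply x ij.2

lemma symOf_toSym {M : Matrix (Fin p) (Fin p) ℝ} (hM : Mᵀ = M) :
    symOf (toSym M) = M := by
  ext i j
  by_cases h : i ≤ j
  · simp [symOf, toSym, h]
  · calc symOf (toSym M) i j = M j i := by simp [symOf, toSym, h]
    _ = Mᵀ i j := rfl
    _ = M i j := by rw [hM]

lemma symOf_add (x y : SymIdx p → ℝ) : symOf (x + y) = symOf x + symOf y := by
  ext i j; by_cases h : i ≤ j <;> simp [symOf, h]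

lemma symOf_smul (c : ℝ) (x : SymIdx p → ℝ) : symOf (c • x) = c • symOf x := by
  ext i j; by_cases h : i ≤ j <;> simp [symOf, h]

/-- `symOf` as a linear map. -/
def symOfL : (SymIdx p → ℝ) →ₗ[ℝ] Matrix (Fin p) (Fin p) ℝ where
  toFun := symOf
  map_add' := symOf_add
  map_smul' := symOf_smul

/-- `toSym` as a linear map. -/
def toSymL : Matrix (Fin p) (Fin p) ℝ →ₗ[ℝ] (SymIdx p → ℝ) where
  toFun := toSym
  map_add' := fun _ _ => rfl
  map_smul' := fun _ _ => rfl

@[simp] lemma symOfL_apply (x : SymIdx p → ℝ) : symOfL x = symOf x := rfl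
@[simp] lemma toSymL_apply (M) : (toSymL (p := p)) M = toSym M := rfl

/-- Congruence action `x ↦ A (symOf x) Aᵀ` on symmetric coordinates. -/
def cgr (A : Matrix (Fin p) (Fin p) ℝ) : (SymIdx p → ℝ) →ₗ[ℝ] (SymIdx p → ℝ) :=
  toSymL ∘ₗ (LinearMap.mulRight ℝ Aᵀ) ∘ₗ (LinearMap.mulLeft ℝ A) ∘ₗ symOfL

lemma cgr_apply (A : Matrix (Fin p) (Fin p) ℝ) (x : SymIdx p → ℝ) :
    cgr A x = toSym (A * symOf x * Aᵀ) := by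
  simp [cgr, LinearMap.mulRight_apply, LinearMap.mulLeft_apply, mul_assoc]

lemma transpose_conj {A M : Matrix (Fin p) (Fin p) ℝ} (hM : Mᵀ = M) :
    (A * M * Aᵀ)ᵀ = A * M * Aᵀ := by
  simp [Matrix.transpose_mul, hM, mul_assoc]

lemma symOf_cgr (A : Matrix (Fin p) (Fin p) ℝ) (x : SymIdx p → ℝ) :
    symOf (cgr A x) = A * symOf x * Aᵀ := by
  rw [cgr_apply, symOf_toSym (transpose_conj (symOf_transpose x))]

lemma cgr_mul (A B : Matrix (Fin p) (Fin p) ℝ) :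
    cgr (A * B) = (cgr A).comp (cgr B) := by
  refine LinearMap.ext fun x => ?_
  rw [LinearMap.comp_apply, cgr_apply, cgr_apply, symOf_cgr, Matrix.transpose_mul]
  noncomm_ring

lemma prod_symIdx (d : Fin p → ℝ) :
    ∏ ij : SymIdx p, (d ij.1.1 * d ij.1.2) = (∏ i, d i) ^ (p + 1) := by
  classical
  have h1 : ∏ ij ∈ Finset.univ.filter (fun ij : Fin p × Fin p => ij.1 ≤ ij.2),
          (d ij.1 * d ij.2)
      = ∏ ij : SymIdx p, (d ij.1.1 * d ij.1.2) :=
    Finset.prod_subtype _ (fun x => by simp) _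
  rw [← h1, Finset.prod_filter, Fintype.prod_prod_type]
  have h2 : ∀ i j : Fin p, (if i ≤ j then d i * d j else 1)
      = (if i ≤ j then d i else 1) * (if i ≤ j then d j else 1) := by
    intro i j; split <;> simp
  simp_rw [h2, Finset.prod_mul_distrib]
  have h3 : ∀ i : Fin p, (∏ j, if i ≤ j then d i else 1) = d i ^ (p - (i : ℕ)) := by
    intro i
    rw [← Finset.prod_filter, Finset.prod_const, Finset.filter_le_eq_Ici, Fin.card_Ici]
  have h4 : (∏ i, ∏ j, if i ≤ j then d j else 1) = ∏ j, d j ^ ((j : ℕ) + 1) := by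
    rw [Finset.prod_comm]
    refine Finset.prod_congr rfl fun j _ => ?_
    rw [← Finset.prod_filter, Finset.prod_const, Finset.filter_ge_eq_Iic, Fin.card_Iic]
  simp_rw [h3]
  rw [h4, ← Finset.prod_mul_distrib, ← Finset.prod_pow]
  refine Finset.prod_congr rfl fun i _ => ?_
  rw [← pow_add]
  congr 1
  omega

lemma matrix_det_one_add_of_nilpotent {ι : Type*} [Fintype ι] [DecidableEq ι]
    {A : Matrix ι ι ℝ} (hA : IsNilpotent A) : (1 + A).det = 1 := by
  have hcp : A.charpoly = X ^ (Fintype.card ι) := by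
    have h2 := Matrix.isNilpotent_charpoly_sub_pow_of_isNilpotent hA
    exact sub_eq_zero.mp h2.eq_zero
  have h3 := congrArg (Polynomial.eval (-1 : ℝ)) hcp
  rw [Matrix.charpoly, ← coe_evalRingHom, RingHom.map_det] at h3
  have h4 : (evalRingHom (-1 : ℝ)).mapMatrix (Matrix.charmatrix A) = -(1 + A) := by
    ext i j
    by_cases h : i = j
    · subst h
      simp [Matrix.charmatrix_apply_eq, Matrix.one_apply]
      ring
    · simp [Matrix.charmatrix_apply_ne _ _ _ h, Matrix.one_apply, h]
  rw [h4, Matrix.det_neg] at h3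
  simp only [map_pow, coe_evalRingHom, Polynomial.eval_X] at h3
  have hc : ((-1 : ℝ) ^ Fintype.card ι) ≠ 0 := pow_ne_zero _ (by norm_num)
  field_simp at h3
  simpa using h3

lemma det_id_add_of_nilpotent {ι : Type*} [Fintype ι] [DecidableEq ι]
    {N : (ι → ℝ) →ₗ[ℝ] (ι → ℝ)} (hN : IsNilpotent N) :
    LinearMap.det (LinearMap.id + N) = 1 := by
  have hA : IsNilpotent (LinearMap.toMatrix' N) := by
    have := hN.map (LinearMap.toMatrixAlgEquiv'.toAlgHom :
      ((ι → ℝ) →ₗ[ℝ] (ι → ℝ)) →ₐ[ℝ] Matrix ι ι ℝ)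
    simpa [LinearMap.toMatrixAlgEquiv'] using this
  calc LinearMap.det (LinearMap.id + N)
      = (LinearMap.toMatrix' (LinearMap.id + N)).det := (LinearMap.det_toMatrix' _).symm
    _ = (1 + LinearMap.toMatrix' N).det := by rw [map_add, LinearMap.toMatrix'_id]
    _ = 1 := matrix_det_one_add_of_nilpotent hA

lemma det_cgr_transvection {i j : Fin p} (hij : i ≠ j) (c : ℝ) :
    LinearMap.det (cgr (Matrix.transvection i j c)) = 1 := by
  classical
  set E := Matrix.single i j c with hE
  have hEE : E * E = 0 := by simp [hE, Ne.symm hij]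
  have hFF : Eᵀ * Eᵀ = 0 := by
    rw [← Matrix.transpose_mul, hEE, Matrix.transpose_zero]
  set Ψ : Matrix (Fin p) (Fin p) ℝ → Matrix (Fin p) (Fin p) ℝ :=
    fun M => E * M + M * Eᵀ + E * M * Eᵀ with hΨ
  have hΨsym : ∀ M : Matrix (Fin p) (Fin p) ℝ, Mᵀ = M → (Ψ M)ᵀ = Ψ M := by
    intro M hM
    simp only [hΨ, Matrix.transpose_add, Matrix.transpose_mul, Matrix.transpose_transpose, hM]
    noncomm_ring
  have hΨ3 : ∀ M, Ψ (Ψ (Ψ M)) = 0 := by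
    intro M
    have h1 : ∀ Y : Matrix (Fin p) (Fin p) ℝ, Y * Eᵀ * Eᵀ = 0 := fun Y => by
      rw [Matrix.mul_assoc, hFF, Matrix.mul_zero]
    have h2 : ∀ Y : Matrix (Fin p) (Fin p) ℝ, E * (E * Y) = 0 := fun Y => by
      rw [← Matrix.mul_assoc, hEE, Matrix.zero_mul]
    simp only [hΨ, mul_add, add_mul, ← Matrix.mul_assoc]
    simp [hEE, h1, Matrix.mul_assoc, h2]
  set N := cgr (1 + E) - LinearMap.id with hN
  have hNapp : ∀ x : SymIdx p → ℝ, N x = toSym (Ψ (symOf x)) := by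
    intro x
    have hexp : (1 + E) * symOf x * (1 + E)ᵀ = symOf x + Ψ (symOf x) := by
      simp only [hΨ, Matrix.transpose_add, Matrix.transpose_one]
      noncomm_ring
    have : N x = toSym ((1 + E) * symOf x * (1 + E)ᵀ) - x := by
      simp [hN, cgr_apply]
    rw [this, hexp]
    have : toSym (symOf x + Ψ (symOf x)) = x + toSym (Ψ (symOf x)) := by
      rw [show toSym (symOf x + Ψ (symOf x)) = toSym (symOf x) + toSym (Ψ (symOf x)) from rfl,
        toSym_symOf]
    rw [this]
    abel
  have hsymN : ∀ x, symOf (N x) = Ψ (symOf x) := fun x => by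
    rw [hNapp, symOf_toSym (hΨsym _ (symOf_transpose x))]
  have hN3 : ∀ x, N (N (N x)) = 0 := by
    intro x
    rw [hNapp, hsymN, hsymN, hΨ3]
    rfl
  have hNil : IsNilpotent N := by
    refine ⟨3, ?_⟩
    refine LinearMap.ext fun x => ?_
    have := hN3 x
    simpa [pow_succ, Module.End.mul_apply] using this
  have hdecomp : cgr (1 + E) = LinearMap.id + N := by
    rw [hN]; abel
  have hTmat : Matrix.transvection i j c = 1 + E := rfl
  rw [hTmat, hdecomp, det_id_add_of_nilpotent hNil]

lemma det_cgr_diagonal (d : Fin p → ℝ) :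
    LinearMap.det (cgr (Matrix.diagonal d)) = (Matrix.diagonal d).det ^ (p + 1) := by
  classical
  have key : cgr (Matrix.diagonal d)
      = Matrix.toLin' (Matrix.diagonal (fun ij : SymIdx p => d ij.1.1 * d ij.1.2)) := by
    refine LinearMap.ext fun x => _root_.funext fun ij => ?_
    rw [cgr_apply, Matrix.toLin'_apply]
    show (Matrix.diagonal d * symOf x * (Matrix.diagonal d)ᵀ) ij.1.1 ij.1.2 = _
    rw [Matrix.diagonal_transpose, Matrix.mul_diagonal, Matrix.diagonal_mul,
      Matrix.mulVec_diagonal, symOf_apply x ij.2]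
    ring
  rw [key, LinearMap.det_toLin', Matrix.det_diagonal, Matrix.det_diagonal, prod_symIdx]

theorem det_cgr (A : Matrix (Fin p) (Fin p) ℝ) :
    LinearMap.det (cgr A) = A.det ^ (p + 1) := by
  refine Matrix.diagonal_transvection_induction
    (fun M => LinearMap.det (cgr M) = M.det ^ (p + 1)) A
    (fun D _ => det_cgr_diagonal D) (fun t => ?_) (fun M₁ M₂ h₁ h₂ => ?_)
  · rcases t with ⟨ti, tj, hij, c⟩
    rw [Matrix.TransvectionStruct.toMatrix_mk, det_cgr_transvection hij,
      Matrix.det_transvection_of_ne _ _ hij, one_pow]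
  · rw [cgr_mul, LinearMap.det_comp, Matrix.det_mul, mul_pow, h₁, h₂]

/-! ### Positive definiteness lemmas -/

lemma posDef_conj {A U : Matrix (Fin p) (Fin p) ℝ} (hA : A.PosDef) (hU : IsUnit U.det) :
    (U * A * Uᵀ).PosDef := by
  have hAt : Aᵀ = A := by
    rw [← Matrix.conjTranspose_eq_transpose_of_trivial]; exact hA.isHermitian
  refine Matrix.PosDef.of_dotProduct_mulVec_pos ?_ ?_
  · show (U * A * Uᵀ)ᴴ = _
    rw [Matrix.conjTranspose_eq_transpose_of_trivial, transpose_conj hAt]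
  · intro v hv
    have hdet : IsUnit (Uᵀ).det := by rwa [Matrix.det_transpose]
    have hw : Uᵀ *ᵥ v ≠ 0 := by
      intro h
      apply hv
      have := congrArg (fun w => (Uᵀ)⁻¹ *ᵥ w) h
      simpa [Matrix.mulVec_mulVec, Matrix.nonsing_inv_mul _ hdet] using this
    have key : dotProduct (star v) ((U * A * Uᵀ) *ᵥ v)
        = dotProduct (star (Uᵀ *ᵥ v)) (A *ᵥ (Uᵀ *ᵥ v)) := by
      have h1 : (U * A * Uᵀ) *ᵥ v = U *ᵥ ((A * Uᵀ) *ᵥ v) := by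
        rw [Matrix.mulVec_mulVec, ← Matrix.mul_assoc]
      rw [h1]
      simp only [star_trivial]
      rw [Matrix.dotProduct_mulVec v U, ← Matrix.mulVec_transpose, Matrix.mulVec_mulVec,
        ← Matrix.mulVec_mulVec]
    rw [key]
    exact hA.dotProduct_mulVec_pos hw

lemma commute_inv_of_commute {A B : Matrix (Fin p) (Fin p) ℝ}
    (h : A * B = B * A) (hB : IsUnit B.det) : A * B⁻¹ = B⁻¹ * A := by
  calc A * B⁻¹ = B⁻¹ * (B * A) * B⁻¹ := by
        rw [← Matrix.mul_assoc, Matrix.nonsing_inv_mul _ hB, Matrix.one_mul]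
    _ = B⁻¹ * (A * B) * B⁻¹ := by rw [h]
    _ = B⁻¹ * A * (B * B⁻¹) := by noncomm_ring
    _ = B⁻¹ * A := by rw [Matrix.mul_nonsing_inv _ hB, Matrix.mul_one]

open scoped MatrixOrder in
lemma posDef_inv_mul {X B : Matrix (Fin p) (Fin p) ℝ} (hX : X.PosDef) (hB : B.PosDef)
    (hBX : B = 1 - X ∨ B = 1 + X) : (B⁻¹ * X).PosDef := by
  classical
  set S := CFC.sqrt X with hSdef
  have hS2 : S * S = X := CFC.sqrt_mul_sqrt_self X hX.posSemidef.nonneg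
  have hSh : Sᵀ = S := by
    rw [← Matrix.conjTranspose_eq_transpose_of_trivial]
    exact (CFC.sqrt_nonneg X).posSemidef.isHermitian
  have hSdet : IsUnit S.det := by
    have h1 : S.det * S.det = X.det := by
      rw [← Matrix.det_mul, hS2]
    refine isUnit_iff_ne_zero.mpr fun h => ?_
    rw [h, mul_zero] at h1
    exact (hX.det_pos.ne' h1.symm).elim
  have hSX : S * X = X * S := by rw [← hS2, Matrix.mul_assoc]
  have hSB : S * B = B * S := by
    rcases hBX with rfl | rfl <;>
      simp only [mul_sub, sub_mul, mul_add, add_mul, Matrix.mul_one, Matrix.one_mul, hSX]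
  have hBdet : IsUnit B.det := isUnit_iff_ne_zero.mpr hB.det_pos.ne'
  have hSBinv : S * B⁻¹ = B⁻¹ * S := commute_inv_of_commute hSB hBdet
  have key : B⁻¹ * X = S * B⁻¹ * Sᵀ := by
    rw [hSh, ← hS2, ← Matrix.mul_assoc, ← hSBinv]
  rw [key]
  exact posDef_conj hB.inv hSdet

/-! ### The change of variables map and its inverse -/

def fwd (x : SymIdx p → ℝ) : SymIdx p → ℝ := toSym ((1 - symOf x)⁻¹ - 1)

def bwd (y : SymIdx p → ℝ) : SymIdx p → ℝ := toSym (1 - (1 + symOf y)⁻¹)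

lemma one_sub_transpose (x : SymIdx p → ℝ) : (1 - symOf x)ᵀ = 1 - symOf x := by
  rw [Matrix.transpose_sub, Matrix.transpose_one, symOf_transpose]

lemma one_add_transpose (x : SymIdx p → ℝ) : (1 + symOf x)ᵀ = 1 + symOf x := by
  rw [Matrix.transpose_add, Matrix.transpose_one, symOf_transpose]

lemma symOf_fwd (x : SymIdx p → ℝ) : symOf (fwd x) = (1 - symOf x)⁻¹ - 1 := by
  refine symOf_toSym ?_
  rw [Matrix.transpose_sub, Matrix.transpose_one, Matrix.transpose_nonsing_inv,
    one_sub_transpose]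

lemma symOf_bwd (y : SymIdx p → ℝ) : symOf (bwd y) = 1 - (1 + symOf y)⁻¹ := by
  refine symOf_toSym ?_
  rw [Matrix.transpose_sub, Matrix.transpose_one, Matrix.transpose_nonsing_inv,
    one_add_transpose]

lemma inv_sub_one_eq {X : Matrix (Fin p) (Fin p) ℝ} (hU : IsUnit (1 - X).det) :
    (1 - X)⁻¹ - 1 = (1 - X)⁻¹ * X := by
  calc (1 - X)⁻¹ - 1 = (1 - X)⁻¹ * 1 - (1 - X)⁻¹ * (1 - X) := by
        rw [Matrix.mul_one, Matrix.nonsing_inv_mul _ hU]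
    _ = (1 - X)⁻¹ * (1 - (1 - X)) := by noncomm_ring
    _ = (1 - X)⁻¹ * X := by rw [sub_sub_cancel]

lemma one_sub_inv_eq {Y : Matrix (Fin p) (Fin p) ℝ} (hU : IsUnit (1 + Y).det) :
    1 - (1 + Y)⁻¹ = (1 + Y)⁻¹ * Y := by
  calc 1 - (1 + Y)⁻¹ = (1 + Y)⁻¹ * (1 + Y) - (1 + Y)⁻¹ * 1 := by
        rw [Matrix.mul_one, Matrix.nonsing_inv_mul _ hU]
    _ = (1 + Y)⁻¹ * (1 + Y - 1) := by noncomm_ring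
    _ = (1 + Y)⁻¹ * Y := by rw [add_sub_cancel_left]

lemma fwd_mem {x : SymIdx p → ℝ} (hx : (symOf x).PosDef ∧ (1 - symOf x).PosDef) :
    (symOf (fwd x)).PosDef := by
  obtain ⟨hX, hB⟩ := hx
  rw [symOf_fwd, inv_sub_one_eq (isUnit_iff_ne_zero.mpr hB.det_pos.ne')]
  exact posDef_inv_mul hX hB (Or.inl rfl)

lemma one_add_symOf_bwd_posDef {y : SymIdx p → ℝ} (hy : (symOf y).PosDef) :
    (1 + symOf y).PosDef := Matrix.PosDef.one.add hy

lemma bwd_mem {y : SymIdx p → ℝ} (hy : (symOf y).PosDef) :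
    (symOf (bwd y)).PosDef ∧ (1 - symOf (bwd y)).PosDef := by
  have hB : (1 + symOf y).PosDef := one_add_symOf_bwd_posDef hy
  have hU : IsUnit (1 + symOf y).det := isUnit_iff_ne_zero.mpr hB.det_pos.ne'
  constructor
  · rw [symOf_bwd, one_sub_inv_eq hU]
    exact posDef_inv_mul hy hB (Or.inr rfl)
  · rw [symOf_bwd, sub_sub_cancel]
    exact hB.inv

lemma bwd_fwd {x : SymIdx p → ℝ} (hx : (symOf x).PosDef ∧ (1 - symOf x).PosDef) :
    bwd (fwd x) = x := by
  have hU : IsUnit (1 - symOf x).det := isUnit_iff_ne_zero.mpr hx.2.det_pos.ne'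
  rw [bwd, symOf_fwd]
  have h1 : 1 + ((1 - symOf x)⁻¹ - 1) = (1 - symOf x)⁻¹ := by abel
  rw [h1, Matrix.nonsing_inv_nonsing_inv _ hU, sub_sub_cancel, toSym_symOf]

lemma fwd_bwd {y : SymIdx p → ℝ} (hy : (symOf y).PosDef) :
    fwd (bwd y) = y := by
  have hB : (1 + symOf y).PosDef := one_add_symOf_bwd_posDef hy
  have hU : IsUnit (1 + symOf y).det := isUnit_iff_ne_zero.mpr hB.det_pos.ne'
  rw [fwd, symOf_bwd]
  have h1 : 1 - (1 - (1 + symOf y)⁻¹) = (1 + symOf y)⁻¹ := by abel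
  rw [h1, Matrix.nonsing_inv_nonsing_inv _ hU, add_sub_cancel_left, toSym_symOf]

lemma bijOn_fwd :
    Set.BijOn (fwd (p := p))
      {x : SymIdx p → ℝ | (symOf x).PosDef ∧ (1 - symOf x).PosDef}
      {y : SymIdx p → ℝ | (symOf y).PosDef} := by
  refine ⟨fun x hx => fwd_mem hx, ?_, ?_⟩
  · intro x hx x' hx' h
    rw [← bwd_fwd hx, h, bwd_fwd hx']
  · intro y hy
    exact ⟨bwd y, bwd_mem hy, fwd_bwd hy⟩


lemma symOf_isHermitian (x : SymIdx p → ℝ) : (symOf x).IsHermitian := by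
  show _ = _
  rw [Matrix.conjTranspose_eq_transpose_of_trivial, symOf_transpose]

lemma isOpen_posDef : IsOpen {x : SymIdx p → ℝ | (symOf x).PosDef} := by
  rcases Nat.eq_zero_or_pos p with hp | hp
  · subst hp
    have : {x : SymIdx 0 → ℝ | (symOf x).PosDef} = Set.univ := by
      refine Set.eq_univ_iff_forall.mpr fun x => ⟨symOf_isHermitian x, fun v hv => ?_⟩
      exact absurd (Finsupp.ext fun i : Fin 0 => i.elim0) hv
    rw [this]; exact isOpen_univ
  · rw [Metric.isOpen_iff]
    intro x hx
    set A := symOf x with hA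
    set K := Metric.sphere (0 : Fin p → ℝ) 1 with hK
    have hKc : IsCompact K := isCompact_sphere _ _
    haveI : Nonempty (Fin p) := ⟨⟨0, hp⟩⟩
    have hKne : K.Nonempty := NormedSpace.sphere_nonempty.mpr zero_le_one
    have hQcont : Continuous fun v : Fin p → ℝ => dotProduct v (A *ᵥ v) :=
      continuous_id.dotProduct (continuous_const.matrix_mulVec continuous_id)
    obtain ⟨v₀, hv₀K, hmin⟩ := hKc.exists_isMinOn hKne hQcont.continuousOn
    set m := dotProduct v₀ (A *ᵥ v₀) with hm_def
    have hv₀ne : v₀ ≠ 0 := by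
      intro h
      rw [hK, mem_sphere_iff_norm, h] at hv₀K
      simp at hv₀K
    have hm : 0 < m := by
      have := hx.dotProduct_mulVec_pos hv₀ne
      simpa [star_trivial] using this
    set ε := m / ((p : ℝ) ^ 2 + 1) with hε_def
    have hεpos : 0 < ε := by positivity
    refine ⟨ε, hεpos, fun y hy => ?_⟩
    have hent : ∀ i j : Fin p, |symOf y i j - symOf x i j| < ε := by
      intro i j
      by_cases h : i ≤ j
      · have : symOf y i j = y ⟨(i,j), h⟩ ∧ symOf x i j = x ⟨(i,j), h⟩ := by
          constructor <;> simp [symOf, h]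
        rw [this.1, this.2, ← Real.dist_eq]
        exact lt_of_le_of_lt (dist_le_pi_dist y x _) hy
      · have : symOf y i j = y ⟨(j,i), le_of_not_ge h⟩ ∧
            symOf x i j = x ⟨(j,i), le_of_not_ge h⟩ := by
          constructor <;> simp [symOf, h]
        rw [this.1, this.2, ← Real.dist_eq]
        exact lt_of_le_of_lt (dist_le_pi_dist y x _) hy
    set D := symOf y - A with hD
    have hDij : ∀ i j, |D i j| ≤ ε := by
      intro i j
      have := (hent i j).le
      simpa [hD] using this
    refine Matrix.PosDef.of_dotProduct_mulVec_pos ?_ ?_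
    · exact symOf_isHermitian y
    · intro v hv
      have hvnorm : (0 : ℝ) < ‖v‖ := norm_pos_iff.mpr hv
      set u := ‖v‖⁻¹ • v with hu_def
      have hu : ‖u‖ = 1 := by
        rw [hu_def, norm_smul, norm_inv, norm_norm, inv_mul_cancel₀ hvnorm.ne']
      have hub : ∀ i, |u i| ≤ 1 := fun i => by
        have := norm_le_pi_norm u i
        rwa [hu, Real.norm_eq_abs] at this
      -- bound the perturbation on the unit sphere
      have habs : |dotProduct u (D *ᵥ u)| ≤ (p : ℝ) ^ 2 * ε := by
        have inner1 : ∀ i, |(D *ᵥ u) i| ≤ (p : ℝ) * ε := by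
          intro i
          have h1 : (D *ᵥ u) i = ∑ j, D i j * u j := by
            simp [Matrix.mulVec, dotProduct]
          rw [h1]
          calc |∑ j, D i j * u j| ≤ ∑ j, |D i j * u j| := Finset.abs_sum_le_sum_abs _ _
            _ ≤ ∑ _j : Fin p, ε := by
                refine Finset.sum_le_sum fun j _ => ?_
                rw [abs_mul]
                calc |D i j| * |u j| ≤ ε * 1 :=
                    mul_le_mul (hDij i j) (hub j) (abs_nonneg _) hεpos.le
                  _ = ε := mul_one _
            _ = (p : ℝ) * ε := by simp [mul_comm]
        calc |dotProduct u (D *ᵥ u)| ≤ ∑ i, |u i * (D *ᵥ u) i| :=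
            Finset.abs_sum_le_sum_abs _ _
          _ ≤ ∑ _i : Fin p, (p : ℝ) * ε := by
              refine Finset.sum_le_sum fun i _ => ?_
              rw [abs_mul]
              calc |u i| * |(D *ᵥ u) i| ≤ 1 * ((p : ℝ) * ε) :=
                  mul_le_mul (hub i) (inner1 i) (abs_nonneg _) zero_le_one
                _ = (p : ℝ) * ε := one_mul _
          _ = (p : ℝ) ^ 2 * ε := by
              rw [Finset.sum_const]
              simp [pow_two]
              ring
      have huK : u ∈ K := by
        rw [hK, mem_sphere_iff_norm]
        simpa using hu
      have hQx : m ≤ dotProduct u (A *ᵥ u) := hmin huK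
      have hsplit : dotProduct u (symOf y *ᵥ u)
          = dotProduct u (A *ᵥ u) + dotProduct u (D *ᵥ u) := by
        have : symOf y = A + D := by rw [hD]; abel
        rw [this, Matrix.add_mulVec, dotProduct_add]
      have hεbound : (p : ℝ) ^ 2 * ε < m := by
        rw [hε_def, mul_div_assoc']
        rw [div_lt_iff₀ (by positivity)]
        nlinarith [hm]
      have hupos : 0 < dotProduct u (symOf y *ᵥ u) := by
        have h2 : -((p : ℝ) ^ 2 * ε) ≤ dotProduct u (D *ᵥ u) := neg_le_of_abs_le habs
        rw [hsplit]
        linarith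
      have hscale : dotProduct v (symOf y *ᵥ v)
          = ‖v‖ ^ 2 * dotProduct u (symOf y *ᵥ u) := by
        have hvu : v = ‖v‖ • u := by
          rw [hu_def, smul_smul, mul_inv_cancel₀ hvnorm.ne', one_smul]
        conv_lhs => rw [hvu]
        rw [Matrix.mulVec_smul, dotProduct_smul, smul_dotProduct]
        simp [smul_eq_mul, pow_two]
        ring
      have : 0 < dotProduct v (symOf y *ᵥ v) := by
        rw [hscale]
        positivity
      simpa [star_trivial] using this


lemma symOf_sub (x y : SymIdx p → ℝ) : symOf (x - y) = symOf x - symOf y := by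
  ext i j; by_cases h : i ≤ j <;> simp [symOf, h]

lemma symOf_toSym_one : symOf (toSym (1 : Matrix (Fin p) (Fin p) ℝ)) = 1 :=
  symOf_toSym Matrix.transpose_one

lemma isOpen_domain :
    IsOpen {x : SymIdx p → ℝ | (symOf x).PosDef ∧ (1 - symOf x).PosDef} := by
  have h2 : {x : SymIdx p → ℝ | (1 - symOf x).PosDef}
      = (fun x : SymIdx p → ℝ => toSym (1 : Matrix (Fin p) (Fin p) ℝ) - x) ⁻¹'
          {x : SymIdx p → ℝ | (symOf x).PosDef} := by
    ext x
    simp only [Set.mem_preimage, Set.mem_setOf_eq]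
    rw [symOf_sub, symOf_toSym_one]
  have : {x : SymIdx p → ℝ | (symOf x).PosDef ∧ (1 - symOf x).PosDef}
      = {x : SymIdx p → ℝ | (symOf x).PosDef} ∩ {x : SymIdx p → ℝ | (1 - symOf x).PosDef} :=
    rfl
  rw [this, h2]
  exact isOpen_posDef.inter (isOpen_posDef.preimage (continuous_const.sub continuous_id))

section Analysis

attribute [local instance] Matrix.linftyOpNormedAddCommGroup Matrix.linftyOpNormedSpace
  Matrix.linftyOpNormedRing Matrix.linftyOpNormedAlgebra

/-- `symOf` as a continuous linear map. -/
def symOfCLM : (SymIdx p → ℝ) →L[ℝ] Matrix (Fin p) (Fin p) ℝ :=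
  LinearMap.toContinuousLinearMap symOfL

/-- `toSym` as a continuous linear map. -/
def toSymCLM : Matrix (Fin p) (Fin p) ℝ →L[ℝ] (SymIdx p → ℝ) :=
  LinearMap.toContinuousLinearMap toSymL

/-- the derivative of `fwd` -/
def cgrCLM (A : Matrix (Fin p) (Fin p) ℝ) : (SymIdx p → ℝ) →L[ℝ] (SymIdx p → ℝ) :=
  LinearMap.toContinuousLinearMap (cgr A)

@[simp] lemma symOfCLM_apply (x : SymIdx p → ℝ) : symOfCLM x = symOf x := rfl
@[simp] lemma toSymCLM_apply (M) : (toSymCLM (p := p)) M = toSym M := rfl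
@[simp] lemma cgrCLM_apply (A : Matrix (Fin p) (Fin p) ℝ) (x) : cgrCLM A x = cgr A x := rfl

lemma hasFDerivAt_fwd {x : SymIdx p → ℝ} (hx : (1 - symOf x).PosDef) :
    HasFDerivAt (fwd (p := p)) (cgrCLM ((1 - symOf x)⁻¹)) x := by
  have hU : IsUnit (1 - symOf x) := hx.isUnit
  set u : (Matrix (Fin p) (Fin p) ℝ)ˣ := hU.unit with hu
  have hucoe : (u : Matrix (Fin p) (Fin p) ℝ) = 1 - symOf x := hU.unit_spec
  have h1 : HasFDerivAt (fun z : SymIdx p → ℝ => 1 - symOf z)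
      (-(symOfCLM (p := p))) x := by
    exact ((symOfCLM (p := p)).hasFDerivAt (x := x)).const_sub
      (1 : Matrix (Fin p) (Fin p) ℝ)
  have h2 : HasFDerivAt (Ring.inverse : Matrix (Fin p) (Fin p) ℝ → Matrix (Fin p) (Fin p) ℝ)
      (-(ContinuousLinearMap.mulLeftRight ℝ _ (↑u⁻¹) (↑u⁻¹))) (1 - symOf x) := by
    have := hasFDerivAt_ringInverse (𝕜 := ℝ) u
    rwa [hucoe] at this
  have h3 := (h2.comp x h1).sub_const (1 : Matrix (Fin p) (Fin p) ℝ)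
  have h5 := (toSymCLM (p := p)).hasFDerivAt.comp x h3
  have hfun : (fwd (p := p))
      = fun z => toSymCLM (Ring.inverse (1 - symOf z) - 1) := by
    funext z
    rw [fwd, ← Matrix.nonsing_inv_eq_ringInverse]
    rfl
  have hder : cgrCLM ((1 - symOf x)⁻¹)
      = (toSymCLM (p := p)).comp
          ((-(ContinuousLinearMap.mulLeftRight ℝ _ (↑u⁻¹) (↑u⁻¹))).comp
            (-(symOfCLM (p := p)))) := by
    refine ContinuousLinearMap.ext fun h => ?_
    have huinv : ((u⁻¹ : (Matrix (Fin p) (Fin p) ℝ)ˣ) : Matrix (Fin p) (Fin p) ℝ)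
        = (1 - symOf x)⁻¹ := by
      rw [Matrix.coe_units_inv, hucoe]
    simp only [ContinuousLinearMap.comp_apply, ContinuousLinearMap.neg_apply,
      ContinuousLinearMap.mulLeftRight_apply, cgrCLM_apply, symOfCLM_apply, toSymCLM_apply,
      map_neg, neg_neg, huinv]
    rw [cgr_apply, Matrix.transpose_nonsing_inv, one_sub_transpose]
    show _ = toSym (-((1 - symOf x)⁻¹ * -(symOf h) * (1 - symOf x)⁻¹))
    rw [Matrix.mul_neg, Matrix.neg_mul, neg_neg]
  rw [hfun, hder]
  exact h5

lemma clm_det_cgr (A : Matrix (Fin p) (Fin p) ℝ) :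
    (cgrCLM A).det = A.det ^ (p + 1) := by
  have : (cgrCLM A : (SymIdx p → ℝ) →ₗ[ℝ] (SymIdx p → ℝ)) = cgr A :=
    LinearMap.coe_toContinuousLinearMap (cgr A)
  rw [ContinuousLinearMap.det, this, det_cgr]

end Analysis

end BetaAux

open BetaAux in
theorem beta_typeI_typeII_change_of_variables (p : ℕ) :
    Set.BijOn
      (fun x : SymIdx p → ℝ => fun ij : SymIdx p =>
        ((1 - symOf x)⁻¹ - 1) ij.1.1 ij.1.2)
      {x : SymIdx p → ℝ | (symOf x).PosDef ∧ (1 - symOf x).PosDef}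
      {y : SymIdx p → ℝ | (symOf y).PosDef}
    ∧ ∀ a b : ℝ, ((p : ℝ) - 1) / 2 < a → ((p : ℝ) - 1) / 2 < b →
      (∫ x in {x : SymIdx p → ℝ | (symOf x).PosDef ∧ (1 - symOf x).PosDef},
          (symOf x).det ^ (a - ((p : ℝ) + 1) / 2) *
            (1 - symOf x).det ^ (b - ((p : ℝ) + 1) / 2))
        = ∫ y in {y : SymIdx p → ℝ | (symOf y).PosDef},
            (symOf y).det ^ (a - ((p : ℝ) + 1) / 2) *
              (1 + symOf y).det ^ (-(a + b)) := by
  have hbij := bijOn_fwd (p := p)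
  refine ⟨hbij, fun a b ha hb => ?_⟩
  set S := {x : SymIdx p → ℝ | (symOf x).PosDef ∧ (1 - symOf x).PosDef} with hS
  set T := {y : SymIdx p → ℝ | (symOf y).PosDef} with hT
  have hSmeas : MeasurableSet S := (isOpen_domain (p := p)).measurableSet
  set g : (SymIdx p → ℝ) → ℝ := fun y =>
    (symOf y).det ^ (a - ((p : ℝ) + 1) / 2) * (1 + symOf y).det ^ (-(a + b)) with hg
  have hderiv : ∀ x ∈ S, HasFDerivWithinAt (fwd (p := p))
      (cgrCLM ((1 - symOf x)⁻¹)) S x :=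
    fun x hx => (hasFDerivAt_fwd hx.2).hasFDerivWithinAt
  have hCoV := MeasureTheory.integral_image_eq_integral_abs_det_fderiv_smul
    (volume : Measure (SymIdx p → ℝ)) hSmeas hderiv hbij.injOn g
  rw [hbij.image_eq] at hCoV
  rw [hCoV]
  refine MeasureTheory.setIntegral_congr_fun hSmeas fun x hx => ?_
  obtain ⟨hX, hB⟩ := hx
  have hdetX : 0 < (symOf x).det := hX.det_pos
  have hdetB : 0 < (1 - symOf x).det := hB.det_pos
  have hUB : IsUnit (1 - symOf x).det := isUnit_iff_ne_zero.mpr hdetB.ne'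
  have hdetBinv : ((1 - symOf x)⁻¹).det = (1 - symOf x).det⁻¹ := by
    rw [Matrix.det_nonsing_inv, Ring.inverse_eq_inv']
  have hdet1 : (cgrCLM ((1 - symOf x)⁻¹)).det = ((1 - symOf x).det⁻¹) ^ (p + 1) := by
    rw [clm_det_cgr, hdetBinv]
  have hsym : symOf (fwd x) = (1 - symOf x)⁻¹ - 1 := symOf_fwd x
  have hYdet : (symOf (fwd x)).det = (1 - symOf x).det⁻¹ * (symOf x).det := by
    rw [hsym, inv_sub_one_eq hUB, Matrix.det_mul, hdetBinv]
  have h1Y : (1 + symOf (fwd x)) = (1 - symOf x)⁻¹ := by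
    rw [hsym]; abel
  simp only [smul_eq_mul, hg]
  rw [hdet1, hYdet, h1Y, Matrix.det_nonsing_inv, Ring.inverse_eq_inv']
  -- now pure real arithmetic with rpow
  set s := (symOf x).det
  set t := (1 - symOf x).det
  have hti : (0 : ℝ) < t⁻¹ := inv_pos.mpr hdetB
  have e1 : |(t⁻¹) ^ (p + 1)| = t ^ (-((p : ℝ) + 1)) := by
    rw [abs_of_pos (pow_pos hti _), ← Real.rpow_natCast t⁻¹ (p + 1),
      Real.inv_rpow hdetB.le, ← Real.rpow_neg hdetB.le]
    push_cast
    ring_nf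
  have e2 : (t⁻¹ * s) ^ (a - ((p : ℝ) + 1) / 2)
      = t ^ (-(a - ((p : ℝ) + 1) / 2)) * s ^ (a - ((p : ℝ) + 1) / 2) := by
    rw [Real.mul_rpow hti.le hdetX.le, Real.inv_rpow hdetB.le, ← Real.rpow_neg hdetB.le]
  have e3 : (t⁻¹) ^ (-(a + b)) = t ^ (a + b) := by
    rw [Real.inv_rpow hdetB.le, ← Real.rpow_neg hdetB.le, neg_neg]
  rw [e1, e2, e3]
  have e4 : t ^ (-((p : ℝ) + 1)) * (t ^ (-(a - ((p : ℝ) + 1) / 2)) * s ^ (a - ((p : ℝ) + 1) / 2) * t ^ (a + b))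
      = s ^ (a - ((p : ℝ) + 1) / 2) * (t ^ (-((p : ℝ) + 1)) * t ^ (-(a - ((p : ℝ) + 1) / 2)) * t ^ (a + b)) := by
    ring
  rw [e4, ← Real.rpow_add hdetB, ← Real.rpow_add hdetB]
  congr 1
  congr 1
  ring
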